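/- Let E be a finite-dimensional inner product space over 𝕜, where 𝕜 is ℝ or ℂ, and let p be a natural number. Every sequence (V_n)_{n∈ℕ} of subspaces of E with finrank V_n = p for all n admits a strictly increasing function φ : ℕ → ℕ and a subspace V of E with finrank V = p such that ‖P_{V_{φ(n)}} − P_V‖ → 0 as n → ∞. -/

import Mathlib

open FiniteDimensional Filter

/-- The orthogonal projection onto a subspace `V` of a finite-dimensional inner product
space, regarded as a continuous linear endomorphism. -/
noncomputable def orthProjection {𝕜 E : Type*} [RCLike 𝕜] [NormedAddCommGroup E]
    [InnerProductSpace 𝕜 E] [FiniteDimensional 𝕜 E] (V : Submodule 𝕜 E) : E →L[𝕜] E :=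
  V.subtypeL.comp (V.orthogonalProjectionOnto)

section Aux

variable {𝕜 E : Type*} [RCLike 𝕜] [NormedAddCommGroup E]
    [InnerProductSpace 𝕜 E] [FiniteDimensional 𝕜 E]

lemma orthProjection_norm_le (V : Submodule 𝕜 E) : ‖orthProjection V‖ ≤ 1 := by
  refine ContinuousLinearMap.opNorm_le_bound _ zero_le_one (fun x => ?_)
  simp only [orthProjection, ContinuousLinearMap.comp_apply, Submodule.subtypeL_apply, one_mul]
  exact (V.orthogonalProjectionOnto).le_opNorm x |>.trans
    (by nlinarith [Submodule.orthogonalProjectionOnto_norm_le V, norm_nonneg x])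

lemma orthProjection_idem (V : Submodule 𝕜 E) :
    orthProjection V * orthProjection V = orthProjection V := by
  ext x
  simp [orthProjection, ContinuousLinearMap.mul_apply, Submodule.orthogonalProjectionOnto_mem_subspace_eq_self,
    Submodule.starProjection_eq_self_iff, Submodule.starProjection_apply_mem]

lemma orthProjection_isProj (V : Submodule 𝕜 E) :
    LinearMap.IsProj V (orthProjection V).toLinearMap := by
  constructor
  · intro x; exact (V.orthogonalProjectionOnto x).2
  · intro x hx
    exact Submodule.starProjection_eq_self_iff.2 hx

lemma orthProjection_trace (V : Submodule 𝕜 E) :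
    LinearMap.trace 𝕜 E (orthProjection V).toLinearMap = (Module.finrank 𝕜 V : 𝕜) :=
  (orthProjection_isProj V).trace

lemma eq_orthProjection_of_idem_selfAdjoint [CompleteSpace E] (Q : E →L[𝕜] E)
    (hidem : Q * Q = Q) (hsa : IsSelfAdjoint Q) :
    orthProjection (LinearMap.range (Q : E →ₗ[𝕜] E)) = Q := by
  set W := LinearMap.range (Q : E →ₗ[𝕜] E)
  ext x
  have h1 : Q x ∈ W := LinearMap.mem_range_self _ x
  have h2 : x - Q x ∈ Wᗮ := by
    rintro w ⟨y, rfl⟩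
    have hsym := hsa.isSymmetric
    have hQQ : Q (Q y) = Q y := by
      conv_rhs => rw [← hidem]
      rfl
    have hQx : Q (Q x) = Q x := by
      conv_rhs => rw [← hidem]
      rfl
    calc inner 𝕜 (Q y) (x - Q x) = inner 𝕜 y (Q (x - Q x)) := by
          exact hsym y (x - Q x)
      _ = 0 := by rw [map_sub, hQx, sub_self, inner_zero_right]
  exact Submodule.eq_starProjection_of_mem_orthogonal h1 h2


end Aux

/-- Every sequence of `p`-dimensional subspaces of a finite-dimensional inner product space
admits a subsequence converging, in the gap metric, to a `p`-dimensional subspace. -/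
theorem grassmannian_sequentially_compact {𝕜 E : Type*} [RCLike 𝕜] [NormedAddCommGroup E]
    [InnerProductSpace 𝕜 E] [FiniteDimensional 𝕜 E] (p : ℕ)
    (V : ℕ → Submodule 𝕜 E) (hV : ∀ n, Module.finrank 𝕜 (V n) = p) :
    ∃ φ : ℕ → ℕ, StrictMono φ ∧ ∃ W : Submodule 𝕜 E, Module.finrank 𝕜 W = p ∧
      Tendsto (fun n => ‖orthProjection (V (φ n)) - orthProjection W‖) atTop (nhds 0) := by
  haveI : CompleteSpace E := FiniteDimensional.complete 𝕜 E
  set P : ℕ → (E →L[𝕜] E) := fun n => orthProjection (V n) with hP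
  have hmem : ∀ n, P n ∈ Metric.closedBall (0 : E →L[𝕜] E) 1 := fun n => by
    simpa [Metric.mem_closedBall, dist_zero_right] using orthProjection_norm_le (V n)
  haveI : ProperSpace (E →L[𝕜] E) := FiniteDimensional.proper 𝕜 _
  obtain ⟨Q, hQmem, φ, hφ, hconv⟩ :=
    (isCompact_closedBall (0 : E →L[𝕜] E) 1).tendsto_subseq hmem
  -- Q is idempotent
  have hidem : Q * Q = Q := by
    have h1 : Tendsto (fun n => P (φ n) * P (φ n)) atTop (nhds (Q * Q)) := hconv.mul hconv
    have h2 : (fun n => P (φ n) * P (φ n)) = fun n => P (φ n) := by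
      funext n; exact orthProjection_idem _
    rw [h2] at h1
    exact tendsto_nhds_unique h1 hconv
  -- Q is self-adjoint
  have hsa : IsSelfAdjoint Q := by
    have h1 : Tendsto (fun n => star (P (φ n))) atTop (nhds (star Q)) := hconv.star
    have h2 : (fun n => star (P (φ n))) = fun n => P (φ n) := by
      funext n; exact isSelfAdjoint_starProjection (V (φ n))
    rw [h2] at h1
    exact tendsto_nhds_unique h1 hconv
  set W := LinearMap.range (Q : E →ₗ[𝕜] E) with hW
  have hQW : orthProjection W = Q := eq_orthProjection_of_idem_selfAdjoint Q hidem hsa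
  -- trace argument for the rank
  have hrank : Module.finrank 𝕜 W = p := by
    set T : (E →L[𝕜] E) →ₗ[𝕜] 𝕜 :=
      (LinearMap.trace 𝕜 E).comp (ContinuousLinearMap.coeLM 𝕜) with hT
    have hTc : Continuous T := T.continuous_of_finiteDimensional
    have h1 : Tendsto (fun n => T (P (φ n))) atTop (nhds (T Q)) :=
      (hTc.tendsto Q).comp hconv
    have h2 : (fun n => T (P (φ n))) = fun _ => (p : 𝕜) := by
      funext n
      simp only [hT, LinearMap.comp_apply, ContinuousLinearMap.coeLM_apply]
      rw [show ((P (φ n) : E →ₗ[𝕜] E)) = (orthProjection (V (φ n))).toLinearMap from rfl,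
        orthProjection_trace, hV]
    rw [h2] at h1
    have h3 : T Q = (p : 𝕜) := tendsto_nhds_unique h1 tendsto_const_nhds
    have h4 : T Q = (Module.finrank 𝕜 W : 𝕜) := by
      rw [← hQW]
      simp only [hT, LinearMap.comp_apply, ContinuousLinearMap.coeLM_apply]
      exact orthProjection_trace W
    have := h4.symm.trans h3
    exact_mod_cast this
  refine ⟨φ, hφ, W, hrank, ?_⟩
  rw [hQW]
  exact tendsto_iff_norm_sub_tendsto_zero.mp hconv
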